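/- Let G[X,Y] be a bipartite multigraph on finite disjoint vertex sets X and Y, and let g, f be functions assigning a natural number to each vertex with g(x) ≤ f(x) for all x ∈ X. Then G has a spanning subgraph F such that g(x) ≤ deg_F(x) ≤ f(x) for every x ∈ X and deg_F(y) ≤ f(y) for every y ∈ Y, if and only if for every A ⊆ X and every B ⊆ Y one has ∑_{y∈B} f(y) ≥ ∑_{x∈A} max{0, g(x) − e_G(x, Y∖B)}. -/
import Mathlib

open Finset

section Aux

variable {X Y : Type*} [Fintype X] [Fintype Y] [DecidableEq X] [DecidableEq Y]

/-- termwise supermodularity of the deficiency terms -/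
lemma bgf_term_super (eG : X → Y → ℕ) (g : X → ℕ) (B C : Finset Y) (x : X) :
    (g x - ∑ y ∈ Bᶜ, eG x y) + (g x - ∑ y ∈ Cᶜ, eG x y) ≤
    (g x - ∑ y ∈ (B ∪ C)ᶜ, eG x y) + (g x - ∑ y ∈ (B ∩ C)ᶜ, eG x y) := by
  have h1 : (B ∪ C)ᶜ = Bᶜ ∩ Cᶜ := by
    ext y; simp [not_or]
  have h2 : (B ∩ C)ᶜ = Bᶜ ∪ Cᶜ := by
    ext y; simp
  rw [h1, h2]
  have hm : ∑ y ∈ Bᶜ ∪ Cᶜ, eG x y + ∑ y ∈ Bᶜ ∩ Cᶜ, eG x y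
      = ∑ y ∈ Bᶜ, eG x y + ∑ y ∈ Cᶜ, eG x y := Finset.sum_union_inter
  have hab : ∑ y ∈ Bᶜ ∩ Cᶜ, eG x y ≤ ∑ y ∈ Bᶜ, eG x y :=
    Finset.sum_le_sum_of_subset Finset.inter_subset_left
  have hac : ∑ y ∈ Bᶜ ∩ Cᶜ, eG x y ≤ ∑ y ∈ Cᶜ, eG x y :=
    Finset.sum_le_sum_of_subset Finset.inter_subset_right
  omega

/-- union of two blocking sets is blocking -/
lemma bgf_blocking_union (eG : X → Y → ℕ) (g : X → ℕ) (fY : Y → ℕ) (x₀ : X)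
    (hcond : ∀ B : Finset Y, ∑ x, (g x - ∑ y ∈ Bᶜ, eG x y) ≤ ∑ y ∈ B, fY y)
    (B C : Finset Y)
    (hB : ∑ x, (g x - ∑ y ∈ Bᶜ, eG x y) = ∑ y ∈ B, fY y)
    (hC : ∑ x, (g x - ∑ y ∈ Cᶜ, eG x y) = ∑ y ∈ C, fY y)
    (hB' : g x₀ ≤ ∑ y ∈ Bᶜ, eG x₀ y)
    (hC' : g x₀ ≤ ∑ y ∈ Cᶜ, eG x₀ y) :
    (∑ x, (g x - ∑ y ∈ (B ∪ C)ᶜ, eG x y) = ∑ y ∈ B ∪ C, fY y) ∧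
      g x₀ ≤ ∑ y ∈ (B ∪ C)ᶜ, eG x₀ y := by
  have hterm : ∀ x ∈ (univ : Finset X),
      (g x - ∑ y ∈ Bᶜ, eG x y) + (g x - ∑ y ∈ Cᶜ, eG x y) ≤
      (g x - ∑ y ∈ (B ∪ C)ᶜ, eG x y) + (g x - ∑ y ∈ (B ∩ C)ᶜ, eG x y) :=
    fun x _ => bgf_term_super eG g B C x
  have hsum : ∑ x, ((g x - ∑ y ∈ Bᶜ, eG x y) + (g x - ∑ y ∈ Cᶜ, eG x y)) ≤
      ∑ x, ((g x - ∑ y ∈ (B ∪ C)ᶜ, eG x y) + (g x - ∑ y ∈ (B ∩ C)ᶜ, eG x y)) :=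
    Finset.sum_le_sum hterm
  have hf : ∑ y ∈ B ∪ C, fY y + ∑ y ∈ B ∩ C, fY y = ∑ y ∈ B, fY y + ∑ y ∈ C, fY y :=
    Finset.sum_union_inter
  have hu := hcond (B ∪ C)
  have hi := hcond (B ∩ C)
  rw [Finset.sum_add_distrib, Finset.sum_add_distrib] at hsum
  -- all inequalities are equalities
  have hequ : ∑ x, (g x - ∑ y ∈ (B ∪ C)ᶜ, eG x y) = ∑ y ∈ B ∪ C, fY y := by omega
  have heqi : ∑ x, (g x - ∑ y ∈ (B ∩ C)ᶜ, eG x y) = ∑ y ∈ B ∩ C, fY y := by omega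
  refine ⟨hequ, ?_⟩
  -- termwise equality
  have hsum_eq : ∑ x, ((g x - ∑ y ∈ Bᶜ, eG x y) + (g x - ∑ y ∈ Cᶜ, eG x y)) =
      ∑ x, ((g x - ∑ y ∈ (B ∪ C)ᶜ, eG x y) + (g x - ∑ y ∈ (B ∩ C)ᶜ, eG x y)) := by
    rw [Finset.sum_add_distrib, Finset.sum_add_distrib]
    omega
  have hterm_eq := (Finset.sum_eq_sum_iff_of_le hterm).mp hsum_eq x₀ (Finset.mem_univ x₀)
  have hBC' : g x₀ ≤ ∑ y ∈ (B ∩ C)ᶜ, eG x₀ y := by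
    refine le_trans hB' (Finset.sum_le_sum_of_subset ?_)
    exact Finset.compl_subset_compl.mpr Finset.inter_subset_left
  omega

/-- selection of a good augmenting neighbor -/
lemma bgf_exists_good_y (eG : X → Y → ℕ) (g : X → ℕ) (fY : Y → ℕ) (x₀ : X)
    (hg : 0 < g x₀)
    (hcond : ∀ B : Finset Y, ∑ x, (g x - ∑ y ∈ Bᶜ, eG x y) ≤ ∑ y ∈ B, fY y) :
    ∃ y₀ : Y, 0 < eG x₀ y₀ ∧ ∀ B : Finset Y, y₀ ∈ B →
      (∑ x, (g x - ∑ y ∈ Bᶜ, eG x y) = ∑ y ∈ B, fY y) →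
      ∑ y ∈ Bᶜ, eG x₀ y < g x₀ := by
  classical
  have hdeg : g x₀ ≤ ∑ y, eG x₀ y := by
    have h0 := hcond ∅
    simp only [Finset.sum_empty, Nat.le_zero, Finset.compl_empty] at h0
    have := Finset.sum_eq_zero_iff.mp h0 x₀ (Finset.mem_univ x₀)
    omega
  set Blocking : Finset Y → Prop := fun B =>
    (∑ x, (g x - ∑ y ∈ Bᶜ, eG x y) = ∑ y ∈ B, fY y) ∧ g x₀ ≤ ∑ y ∈ Bᶜ, eG x₀ y with hBl
  by_cases hex : ∃ B : Finset Y, Blocking B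
  · obtain ⟨M, hMmem, hMmax⟩ :=
      Finset.exists_max_image ((univ : Finset (Finset Y)).filter Blocking) Finset.card
        (by obtain ⟨B, hB⟩ := hex; exact ⟨B, Finset.mem_filter.mpr ⟨Finset.mem_univ _, hB⟩⟩)
    have hMBl : Blocking M := (Finset.mem_filter.mp hMmem).2
    have hsub : ∀ B : Finset Y, Blocking B → B ⊆ M := by
      intro B hB
      have hun := bgf_blocking_union eG g fY x₀ hcond B M hB.1 hMBl.1 hB.2 hMBl.2
      have hmem : B ∪ M ∈ (univ : Finset (Finset Y)).filter Blocking :=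
        Finset.mem_filter.mpr ⟨Finset.mem_univ _, hun.1, hun.2⟩
      have hcard := hMmax _ hmem
      have : B ∪ M = M :=
        (Finset.eq_of_subset_of_card_le Finset.subset_union_right hcard).symm
      exact this ▸ Finset.subset_union_left
    -- find y₀ in Mᶜ with positive multiplicity
    have hpos : 0 < ∑ y ∈ Mᶜ, eG x₀ y := lt_of_lt_of_le hg hMBl.2
    obtain ⟨y₀, hy₀mem, hy₀pos⟩ : ∃ y₀ ∈ Mᶜ, 0 < eG x₀ y₀ := by
      by_contra hcon
      push_neg at hcon
      have : ∑ y ∈ Mᶜ, eG x₀ y = 0 :=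
        Finset.sum_eq_zero (fun y hy => Nat.le_zero.mp (hcon y hy))
      omega
    refine ⟨y₀, hy₀pos, ?_⟩
    intro B hyB htight
    by_contra hle
    push_neg at hle
    have : B ⊆ M := hsub B ⟨htight, hle⟩
    exact (Finset.mem_compl.mp hy₀mem) (this hyB)
  · push_neg at hex
    obtain ⟨y₀, _, hy₀pos⟩ : ∃ y₀ ∈ (univ : Finset Y), 0 < eG x₀ y₀ := by
      by_contra hcon
      push_neg at hcon
      have : ∑ y, eG x₀ y = 0 :=
        Finset.sum_eq_zero (fun y hy => Nat.le_zero.mp (hcon y hy))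
      omega
    refine ⟨y₀, hy₀pos, ?_⟩
    intro B _ htight
    have := hex B
    rw [hBl] at this
    simp only [not_and] at this
    exact lt_of_not_ge (this htight)

/-- main existence lemma, by induction on the total lower demand -/
lemma bgf_exists_subgraph (n : ℕ) :
    ∀ (eG : X → Y → ℕ) (g fX : X → ℕ) (fY : Y → ℕ),
    ∑ x, g x = n → (∀ x, g x ≤ fX x) →
    (∀ B : Finset Y, ∑ x, (g x - ∑ y ∈ Bᶜ, eG x y) ≤ ∑ y ∈ B, fY y) →
    ∃ eF : X → Y → ℕ, (∀ x y, eF x y ≤ eG x y) ∧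
      (∀ x, g x ≤ ∑ y, eF x y ∧ ∑ y, eF x y ≤ fX x) ∧
      (∀ y, ∑ x, eF x y ≤ fY y) := by
  induction n with
  | zero =>
    intro eG g fX fY hsum hgf _
    refine ⟨fun _ _ => 0, fun _ _ => Nat.zero_le _, fun x => ?_, fun y => by simp⟩
    have : g x = 0 := by
      have := Finset.sum_eq_zero_iff.mp hsum x (Finset.mem_univ x)
      exact this
    simp [this]
  | succ n ih =>
    intro eG g fX fY hsum hgf hcond
    -- find x₀ with positive demand
    obtain ⟨x₀, hx₀⟩ : ∃ x₀, 0 < g x₀ := by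
      by_contra hcon
      push_neg at hcon
      have : ∑ x, g x = 0 :=
        Finset.sum_eq_zero (fun x _ => Nat.le_zero.mp (hcon x))
      omega
    obtain ⟨y₀, hy₀pos, hy₀good⟩ := bgf_exists_good_y eG g fY x₀ hx₀ hcond
    -- reduced instance
    set g' : X → ℕ := fun x => if x = x₀ then g x₀ - 1 else g x with hg'
    set fX' : X → ℕ := fun x => if x = x₀ then fX x₀ - 1 else fX x with hfX'
    set fY' : Y → ℕ := fun y => if y = y₀ then fY y₀ - 1 else fY y with hfY'
    set eG' : X → Y → ℕ := fun x y => if x = x₀ ∧ y = y₀ then eG x y - 1 else eG x y with heG'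
    have hsum' : ∑ x, g' x = n := by
      have h1 : g' x₀ + ∑ x ∈ univ.erase x₀, g' x = ∑ x, g' x :=
        Finset.add_sum_erase _ _ (Finset.mem_univ x₀)
      have h2 : g x₀ + ∑ x ∈ univ.erase x₀, g x = ∑ x, g x :=
        Finset.add_sum_erase _ _ (Finset.mem_univ x₀)
      have h3 : ∑ x ∈ univ.erase x₀, g' x = ∑ x ∈ univ.erase x₀, g x := by
        refine Finset.sum_congr rfl (fun x hx => ?_)
        have : x ≠ x₀ := Finset.ne_of_mem_erase hx
        simp [hg', this]
      have h4 : g' x₀ = g x₀ - 1 := by simp [hg']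
      omega
    have hgf' : ∀ x, g' x ≤ fX' x := by
      intro x
      by_cases hx : x = x₀
      · have e1 : g' x = g x₀ - 1 := by simp [hg', hx]
        have e2 : fX' x = fX x₀ - 1 := by simp [hfX', hx]
        have e3 := hgf x₀
        omega
      · simp [hg', hfX', hx, hgf x]
    have hcond' : ∀ B : Finset Y, ∑ x, (g' x - ∑ y ∈ Bᶜ, eG' x y) ≤ ∑ y ∈ B, fY' y := by
      intro B
      by_cases hyB : y₀ ∈ B
      · -- sums over Bᶜ are unchanged
        have hsame : ∀ x, ∑ y ∈ Bᶜ, eG' x y = ∑ y ∈ Bᶜ, eG x y := by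
          intro x
          refine Finset.sum_congr rfl (fun y hy => ?_)
          have : y ≠ y₀ := fun h => (Finset.mem_compl.mp hy) (h ▸ hyB)
          simp [heG', this]
        have hL1 : (g' x₀ - ∑ y ∈ Bᶜ, eG' x₀ y) + ∑ x ∈ univ.erase x₀, (g' x - ∑ y ∈ Bᶜ, eG' x y)
            = ∑ x, (g' x - ∑ y ∈ Bᶜ, eG' x y) :=
          Finset.add_sum_erase _ (fun x => g' x - ∑ y ∈ Bᶜ, eG' x y) (Finset.mem_univ x₀)
        have hL2 : (g x₀ - ∑ y ∈ Bᶜ, eG x₀ y) + ∑ x ∈ univ.erase x₀, (g x - ∑ y ∈ Bᶜ, eG x y)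
            = ∑ x, (g x - ∑ y ∈ Bᶜ, eG x y) :=
          Finset.add_sum_erase _ (fun x => g x - ∑ y ∈ Bᶜ, eG x y) (Finset.mem_univ x₀)
        have hL3 : ∑ x ∈ univ.erase x₀, (g' x - ∑ y ∈ Bᶜ, eG' x y)
            = ∑ x ∈ univ.erase x₀, (g x - ∑ y ∈ Bᶜ, eG x y) := by
          refine Finset.sum_congr rfl (fun x hx => ?_)
          have hne : x ≠ x₀ := Finset.ne_of_mem_erase hx
          rw [hsame x]; simp [hg', hne]
        have hR1 : fY' y₀ + ∑ y ∈ B.erase y₀, fY' y = ∑ y ∈ B, fY' y :=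
          Finset.add_sum_erase _ _ hyB
        have hR2 : fY y₀ + ∑ y ∈ B.erase y₀, fY y = ∑ y ∈ B, fY y :=
          Finset.add_sum_erase _ _ hyB
        have hR3 : ∑ y ∈ B.erase y₀, fY' y = ∑ y ∈ B.erase y₀, fY y := by
          refine Finset.sum_congr rfl (fun y hy => ?_)
          have : y ≠ y₀ := Finset.ne_of_mem_erase hy
          simp [hfY', this]
        have hfY'0 : fY' y₀ = fY y₀ - 1 := by simp [hfY']
        have hg'0 : g' x₀ = g x₀ - 1 := by simp [hg']
        have hcB := hcond B
        have htight := hy₀good B hyB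
        rw [hsame x₀] at hL1
        -- reduce to arithmetic
        by_cases ht : ∑ x, (g x - ∑ y ∈ Bᶜ, eG x y) = ∑ y ∈ B, fY y
        · have := htight ht
          omega
        · omega
      · -- y₀ ∈ Bᶜ
        have hyBc : y₀ ∈ Bᶜ := Finset.mem_compl.mpr hyB
        have hsame : ∀ x, x ≠ x₀ → ∑ y ∈ Bᶜ, eG' x y = ∑ y ∈ Bᶜ, eG x y := by
          intro x hx
          refine Finset.sum_congr rfl (fun y _ => by simp [heG', hx])
        have hE1 : eG' x₀ y₀ + ∑ y ∈ Bᶜ.erase y₀, eG' x₀ y = ∑ y ∈ Bᶜ, eG' x₀ y :=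
          Finset.add_sum_erase _ _ hyBc
        have hE2 : eG x₀ y₀ + ∑ y ∈ Bᶜ.erase y₀, eG x₀ y = ∑ y ∈ Bᶜ, eG x₀ y :=
          Finset.add_sum_erase _ _ hyBc
        have hE3 : ∑ y ∈ Bᶜ.erase y₀, eG' x₀ y = ∑ y ∈ Bᶜ.erase y₀, eG x₀ y := by
          refine Finset.sum_congr rfl (fun y hy => ?_)
          have : y ≠ y₀ := Finset.ne_of_mem_erase hy
          simp [heG', this]
        have hE4 : eG' x₀ y₀ = eG x₀ y₀ - 1 := by simp [heG']
        have hL1 : (g' x₀ - ∑ y ∈ Bᶜ, eG' x₀ y) + ∑ x ∈ univ.erase x₀, (g' x - ∑ y ∈ Bᶜ, eG' x y)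
            = ∑ x, (g' x - ∑ y ∈ Bᶜ, eG' x y) :=
          Finset.add_sum_erase _ (fun x => g' x - ∑ y ∈ Bᶜ, eG' x y) (Finset.mem_univ x₀)
        have hL2 : (g x₀ - ∑ y ∈ Bᶜ, eG x₀ y) + ∑ x ∈ univ.erase x₀, (g x - ∑ y ∈ Bᶜ, eG x y)
            = ∑ x, (g x - ∑ y ∈ Bᶜ, eG x y) :=
          Finset.add_sum_erase _ (fun x => g x - ∑ y ∈ Bᶜ, eG x y) (Finset.mem_univ x₀)
        have hL3 : ∑ x ∈ univ.erase x₀, (g' x - ∑ y ∈ Bᶜ, eG' x y)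
            = ∑ x ∈ univ.erase x₀, (g x - ∑ y ∈ Bᶜ, eG x y) := by
          refine Finset.sum_congr rfl (fun x hx => ?_)
          have hne : x ≠ x₀ := Finset.ne_of_mem_erase hx
          rw [hsame x hne]; simp [hg', hne]
        have hR : ∑ y ∈ B, fY' y = ∑ y ∈ B, fY y := by
          refine Finset.sum_congr rfl (fun y hy => ?_)
          have : y ≠ y₀ := fun h => hyB (h ▸ hy)
          simp [hfY', this]
        have hg'0 : g' x₀ = g x₀ - 1 := by simp [hg']
        have hcB := hcond B
        omega
    obtain ⟨eF', h1, h2, h3⟩ := ih eG' g' fX' fY' hsum' hgf' hcond'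
    refine ⟨fun x y => eF' x y + (if x = x₀ ∧ y = y₀ then 1 else 0), ?_, ?_, ?_⟩
    · intro x y
      by_cases h : x = x₀ ∧ y = y₀
      · obtain ⟨hx, hy⟩ := h
        have hthis : eF' x₀ y₀ ≤ eG x₀ y₀ - 1 := by
          have := h1 x₀ y₀
          simpa [heG'] using this
        have hkey : eF' x₀ y₀ + 1 ≤ eG x₀ y₀ := by omega
        simpa [hx, hy] using hkey
      · have hthis : eF' x y ≤ eG x y := by
          have := h1 x y
          simpa [heG', if_neg h] using this
        simpa [if_neg h] using hthis
    · intro x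
      have hsplit : ∑ y, (eF' x y + (if x = x₀ ∧ y = y₀ then 1 else 0))
          = ∑ y, eF' x y + (if x = x₀ then 1 else 0) := by
        rw [Finset.sum_add_distrib]
        congr 1
        by_cases hx : x = x₀
        · simp [hx]
        · simp [hx]
      rw [hsplit]
      have h2x := h2 x
      by_cases hx : x = x₀
      · rw [if_pos hx]
        have hgx : g x = g x₀ := by rw [hx]
        have hfxx : fX x = fX x₀ := by rw [hx]
        have hg'0 : g' x = g x₀ - 1 := by simp [hg', hx]
        have hfX0 : fX' x = fX x₀ - 1 := by simp [hfX', hx]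
        have := hgf x₀
        omega
      · have hgx : g' x = g x := by simp [hg', hx]
        have hfx : fX' x = fX x := by simp [hfX', hx]
        simp only [hx, if_false]
        omega
    · intro y
      have hsplit : ∑ x, (eF' x y + (if x = x₀ ∧ y = y₀ then 1 else 0))
          = ∑ x, eF' x y + (if y = y₀ then 1 else 0) := by
        rw [Finset.sum_add_distrib]
        congr 1
        by_cases hy : y = y₀
        · simp [hy]
        · simp [hy]
      rw [hsplit]
      have h3y := h3 y
      by_cases hy : y = y₀
      · rw [if_pos hy]
        have hfyy : fY y = fY y₀ := by rw [hy]
        have hf0 : fY' y = fY y₀ - 1 := by simp [hfY', hy]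
        -- Use hcond with B = {y₀}: d({y₀}) ≤ fY y₀; but we need positivity. Instead:
        -- from h3 we get ∑ eF' ≤ fY' y₀ = fY y₀ - 1. If fY y₀ = 0 then ∑ eF' = 0, and we need 1 ≤ fY y₀.
        -- Need: fY y₀ ≥ 1. Prove from hcond with B = univ? Not directly. Prove separately below.
        have hfpos : 1 ≤ fY y₀ := by
          -- take B = {y₀} in hcond' of the *original* condition? We need: the good y₀ has fY y₀ ≥ 1?
          -- Use hcond {y₀}: ∑ x (g x - ∑_{y ≠ y₀} eG x y) ≤ fY y₀.
          -- If fY y₀ = 0 then {y₀} tight iff LHS = 0; tightness gives e(x₀, {y₀}ᶜ) < g x₀,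
          -- i.e. the term at x₀ is positive, contradiction. So either fY y₀ ≥ 1, or {y₀} tight with
          -- positive LHS — impossible. Formalize:
          by_contra hcontra
          push_neg at hcontra
          have hf0' : fY y₀ = 0 := by omega
          have hc := hcond {y₀}
          simp only [Finset.sum_singleton, hf0', Nat.le_zero] at hc
          have htight : ∑ x, (g x - ∑ y ∈ ({y₀} : Finset Y)ᶜ, eG x y) = ∑ y ∈ ({y₀} : Finset Y), fY y := by
            simp [hc, hf0']
          have := hy₀good {y₀} (Finset.mem_singleton_self y₀) htight
          have hterm := Finset.sum_eq_zero_iff.mp hc x₀ (Finset.mem_univ x₀)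
          omega
        omega
      · have hfy : fY' y = fY y := by simp [hfY', hy]
        simp only [hy, if_false]
        omega

end Aux

/-- Theorem 3 (main theorem): a bipartite multigraph `G[X,Y]`, given by its edge
multiplicity function `eG : X → Y → ℕ`, has a spanning subgraph `F` with
`g(x) ≤ deg_F(x) ≤ f(x)` for `x ∈ X` and `deg_F(y) ≤ f(y)` for `y ∈ Y` iff
for all `A ⊆ X`, `B ⊆ Y` we have
`∑_{y∈B} f(y) ≥ ∑_{x∈A} max{0, g(x) − e_G(x, Y∖B)}`. -/
theorem bipartite_gf_factor_iff
    {X Y : Type*} [Fintype X] [Fintype Y] [DecidableEq X] [DecidableEq Y]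
    (eG : X → Y → ℕ) (g f : X ⊕ Y → ℕ)
    (hgf : ∀ x : X, g (Sum.inl x) ≤ f (Sum.inl x)) :
    (∃ eF : X → Y → ℕ,
      (∀ x y, eF x y ≤ eG x y) ∧
      (∀ x : X, g (Sum.inl x) ≤ ∑ y, eF x y ∧ ∑ y, eF x y ≤ f (Sum.inl x)) ∧
      (∀ y : Y, ∑ x, eF x y ≤ f (Sum.inr y)))
    ↔
    (∀ (A : Finset X) (B : Finset Y),
      ∑ x ∈ A, (g (Sum.inl x) - ∑ y ∈ Bᶜ, eG x y) ≤ ∑ y ∈ B, f (Sum.inr y)) := by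
  constructor
  · rintro ⟨eF, hle, hx, hy⟩ A B
    have step1 : ∀ x : X, g (Sum.inl x) - ∑ y ∈ Bᶜ, eG x y ≤ ∑ y ∈ B, eF x y := by
      intro x
      have h1 : ∑ y ∈ Bᶜ, eF x y ≤ ∑ y ∈ Bᶜ, eG x y :=
        Finset.sum_le_sum (fun y _ => hle x y)
      have h2 : ∑ y ∈ B, eF x y + ∑ y ∈ Bᶜ, eF x y = ∑ y, eF x y :=
        Finset.sum_add_sum_compl B _
      have h3 := (hx x).1
      omega
    calc ∑ x ∈ A, (g (Sum.inl x) - ∑ y ∈ Bᶜ, eG x y)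
        ≤ ∑ x ∈ A, ∑ y ∈ B, eF x y := Finset.sum_le_sum (fun x _ => step1 x)
      _ ≤ ∑ x, ∑ y ∈ B, eF x y :=
          Finset.sum_le_sum_of_subset (Finset.subset_univ A)
      _ = ∑ y ∈ B, ∑ x, eF x y := Finset.sum_comm
      _ ≤ ∑ y ∈ B, f (Sum.inr y) := Finset.sum_le_sum (fun y _ => hy y)
  · intro h
    exact bgf_exists_subgraph (∑ x, g (Sum.inl x)) eG (fun x => g (Sum.inl x))
      (fun x => f (Sum.inl x)) (fun y => f (Sum.inr y)) rfl hgf (fun B => h univ B)
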